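/- Assume in addition that g is locally Hölder continuous of some order β ∈ (0, H). Then the set of points of [0,∞) at which the limit process X is discontinuous has Lebesgue measure zero; consequently, X being also bounded on bounded intervals, X is Riemann integrable on every bounded interval [a,b] ⊂ [0,∞). -/

import Mathlib

open MeasureTheory Filter Set

/-- `X` is a continuous solution on `[0,T]` of the ε-approximating equation
`X_t = X₀ + a ∫₀ᵗ (s+ε)^{2H-1} / (X_s 1_{X_s>0} + ε) ds − b ∫₀ᵗ X_s ds + σ g(t)`. -/
def approxSol (X₀ a b σ H : ℝ) (g : ℝ → ℝ) (T ε : ℝ) (X : ℝ → ℝ) : Prop :=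
  ContinuousOn X (Set.Icc 0 T) ∧
    ∀ t ∈ Set.Icc (0:ℝ) T,
      X t = X₀ + a * (∫ s in (0:ℝ)..t,
            (s + ε) ^ (2 * H - 1) / ((if 0 < X s then X s else 0) + ε))
          - b * (∫ s in (0:ℝ)..t, X s) + σ * g t

lemma aux_if_eq_max (x : ℝ) : (if 0 < x then x else 0) = max x 0 := by
  rcases le_or_gt x 0 with h | h
  · simp [not_lt.2 h, max_eq_right h]
  · simp [h, max_eq_left h.le]

lemma aux_phi_contOn {H T ε : ℝ} (hε : 0 < ε) {h : ℝ → ℝ}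
    (hc : ContinuousOn h (Set.Icc 0 T)) :
    ContinuousOn (fun s => (s + ε) ^ (2 * H - 1) / ((if 0 < h s then h s else 0) + ε))
      (Set.Icc 0 T) := by
  apply ContinuousOn.div
  · apply ContinuousOn.rpow_const (by fun_prop)
    intro x hx
    have : (0:ℝ) < x + ε := by have := hx.1; linarith
    exact Or.inl this.ne'
  · have : ContinuousOn (fun s => max (h s) 0 + ε) (Set.Icc 0 T) :=
      (hc.sup continuousOn_const).add continuousOn_const
    refine this.congr fun x hx => ?_
    simp [aux_if_eq_max]
  · intro x hx
    have : (0:ℝ) ≤ max (h x) 0 := le_max_right _ _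
    rw [aux_if_eq_max]
    positivity

lemma aux_bound {X₀ a b σ H : ℝ} (hX₀ : 0 < X₀) (ha : 0 < a) (hb : 0 ≤ b) (hσ : 0 < σ)
    (hH0 : 0 < H) (hH : H < 1/2) {g : ℝ → ℝ} (hg0 : g 0 = 0)
    {T ε : ℝ} (hT : 0 < T) (hε : 0 < ε) {h : ℝ → ℝ}
    (hsol : approxSol X₀ a b σ H g T ε h)
    {C : ℝ} (hC : 0 ≤ C) (hgb : ∀ t ∈ Set.Icc (0:ℝ) T, |g t| ≤ C) :
    ∀ t ∈ Set.Icc (0:ℝ) T,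
      |h t| ≤ (max 1 X₀ + a * (T ^ (2*H) / (2*H)) + 2*σ*C) * (1 + b*T) + σ*C := by
  obtain ⟨hcont, heq⟩ := hsol
  set φ : ℝ → ℝ := fun s => (s + ε) ^ (2 * H - 1) / ((if 0 < h s then h s else 0) + ε) with hφ
  have hφc : ContinuousOn φ (Set.Icc 0 T) := aux_phi_contOn hε hcont
  have h0mem : (0:ℝ) ∈ Set.Icc (0:ℝ) T := ⟨le_refl _, hT.le⟩
  have h0 : h 0 = X₀ := by
    have := heq 0 h0mem
    simpa [hg0] using this
  set U : ℝ := max 1 X₀ + a * (T ^ (2*H) / (2*H)) + 2*σ*C with hUdef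
  have hTH : (0:ℝ) < T ^ (2*H) := Real.rpow_pos_of_pos hT _
  have hHpos : (0:ℝ) < 2*H := by linarith
  have haT : 0 ≤ a * (T ^ (2*H) / (2*H)) := by positivity
  have hσC : (0:ℝ) ≤ σ*C := by positivity
  have hmaxU : max 1 X₀ ≤ U := by
    rw [hUdef]; linarith
  have hU1 : (1:ℝ) ≤ U := le_trans (le_max_left _ _) hmaxU
  have hφint : ∀ u v, u ∈ Set.Icc (0:ℝ) T → v ∈ Set.Icc (0:ℝ) T →
      IntervalIntegrable φ volume u v := fun u v hu hv =>
    (hφc.mono (Set.uIcc_subset_Icc hu hv)).intervalIntegrable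
  have hhint : ∀ u v, u ∈ Set.Icc (0:ℝ) T → v ∈ Set.Icc (0:ℝ) T →
      IntervalIntegrable h volume u v := fun u v hu hv =>
    (hcont.mono (Set.uIcc_subset_Icc hu hv)).intervalIntegrable
  -- upper bound
  have hup : ∀ t ∈ Set.Icc (0:ℝ) T, h t ≤ U := by
    by_contra hcon
    push_neg at hcon
    obtain ⟨t, ht, hUt⟩ := hcon
    set S : Set ℝ := insert (0:ℝ) {s ∈ Set.Icc 0 t | h s ≤ 1} with hSdef
    have hSne : S.Nonempty := ⟨0, Set.mem_insert _ _⟩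
    have hsub : Set.Icc (0:ℝ) t ⊆ Set.Icc (0:ℝ) T := Set.Icc_subset_Icc le_rfl ht.2
    have hSclosed : IsClosed S := by
      rw [hSdef, Set.insert_eq]
      refine isClosed_singleton.union ?_
      have : {s ∈ Set.Icc (0:ℝ) t | h s ≤ 1} = Set.Icc (0:ℝ) t ∩ h ⁻¹' Set.Iic 1 := by
        ext x; simp [Set.mem_Iic, and_comm]
      rw [this]
      exact (hcont.mono hsub).preimage_isClosed_of_isClosed isClosed_Icc isClosed_Iic
    have hSbdd : BddAbove S := by
      refine ⟨t, ?_⟩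
      rintro x (rfl | ⟨hx, _⟩)
      · exact ht.1
      · exact hx.2
    set τ := sSup S with hτdef
    have hτS : τ ∈ S := hSclosed.csSup_mem hSne hSbdd
    have hτ0 : 0 ≤ τ := le_csSup hSbdd (Set.mem_insert _ _)
    have hτt : τ ≤ t := by
      refine csSup_le hSne ?_
      rintro x (rfl | ⟨hx, _⟩)
      · exact ht.1
      · exact hx.2
    have hτT : τ ∈ Set.Icc (0:ℝ) T := ⟨hτ0, hτt.trans ht.2⟩
    have hτval : h τ ≤ max 1 X₀ := by
      rcases hτS with h' | ⟨_, h1⟩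
      · rw [h', h0]; exact le_max_right _ _
      · exact le_trans h1 (le_max_left _ _)
    have htgt : ∀ s, τ < s → s ≤ t → 1 < h s := by
      intro s hs1 hs2
      by_contra hcon2
      push_neg at hcon2
      have hsS : s ∈ S := Set.mem_insert_of_mem _ ⟨⟨hτ0.trans hs1.le, hs2⟩, hcon2⟩
      exact absurd (le_csSup hSbdd hsS) (not_le.2 hs1)
    have hτlt : τ < t := by
      rcases lt_or_eq_of_le hτt with h' | h'
      · exact h'
      · exfalso; rw [h'] at hτval; linarith [le_trans hτval hmaxU]
    -- split integrals
    have hsplitφ : (∫ s in (0:ℝ)..τ, φ s) + (∫ s in τ..t, φ s) = ∫ s in (0:ℝ)..t, φ s :=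
      intervalIntegral.integral_add_adjacent_intervals (hφint 0 τ h0mem hτT)
        (hφint τ t hτT ht)
    have hsplith : (∫ s in (0:ℝ)..τ, h s) + (∫ s in τ..t, h s) = ∫ s in (0:ℝ)..t, h s :=
      intervalIntegral.integral_add_adjacent_intervals (hhint 0 τ h0mem hτT)
        (hhint τ t hτT ht)
    -- a.e. facts on [τ, t]
    have hne : ∀ᵐ x ∂(volume : Measure ℝ), x ≠ τ := by
      rw [ae_iff]
      have : {x : ℝ | ¬ x ≠ τ} = {τ} := by ext x; simp
      rw [this]
      exact Real.volume_singleton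
    have hae1 : φ ≤ᵐ[volume.restrict (Set.Icc τ t)] fun s => s ^ (2*H-1) := by
      filter_upwards [ae_restrict_mem measurableSet_Icc, ae_restrict_of_ae hne] with x hx hxne
      have hx1 : τ < x := lt_of_le_of_ne hx.1 (Ne.symm hxne)
      have hgt := htgt x hx1 hx.2
      have hxpos : 0 < x := lt_of_le_of_lt hτ0 hx1
      have hhx : (0:ℝ) < h x := by linarith
      show (x + ε) ^ (2 * H - 1) / ((if 0 < h x then h x else 0) + ε) ≤ x ^ (2*H-1)
      rw [if_pos hhx]
      calc (x + ε) ^ (2 * H - 1) / (h x + ε)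
          ≤ (x + ε) ^ (2 * H - 1) / 1 := by
            apply div_le_div_of_nonneg_left (Real.rpow_nonneg (by linarith) _) zero_lt_one
            linarith
        _ = (x + ε) ^ (2 * H - 1) := div_one _
        _ ≤ x ^ (2*H-1) := Real.rpow_le_rpow_of_nonpos hxpos (by linarith) (by linarith)
    have hrint : IntervalIntegrable (fun s : ℝ => s ^ (2*H-1)) volume τ t :=
      intervalIntegral.intervalIntegrable_rpow' (by linarith)
    have hmono1 : (∫ s in τ..t, φ s) ≤ ∫ s in τ..t, s ^ (2*H-1) :=
      intervalIntegral.integral_mono_ae_restrict hτt (hφint τ t hτT ht) hrint hae1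
    have hval : (∫ s in τ..t, s ^ (2*H-1)) = (t ^ (2*H) - τ ^ (2*H)) / (2*H) := by
      rw [integral_rpow (Or.inl (by linarith))]
      rw [show (2*H-1+1) = 2*H by ring]
    have hφbound : (∫ s in τ..t, φ s) ≤ T ^ (2*H) / (2*H) := by
      refine hmono1.trans ?_
      rw [hval]
      have h1 : t ^ (2*H) ≤ T ^ (2*H) := Real.rpow_le_rpow ht.1 ht.2 hHpos.le
      have h2 : (0:ℝ) ≤ τ ^ (2*H) := Real.rpow_nonneg hτ0 _
      exact (div_le_div_iff_of_pos_right hHpos).2 (by linarith)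
    have hint2 : 0 ≤ ∫ s in τ..t, h s := by
      refine intervalIntegral.integral_nonneg_of_ae_restrict hτt ?_
      filter_upwards [ae_restrict_mem measurableSet_Icc, ae_restrict_of_ae hne] with x hx hxne
      have hx1 : τ < x := lt_of_le_of_ne hx.1 (Ne.symm hxne)
      show (0:ℝ) ≤ h x
      linarith [htgt x hx1 hx.2]
    have e3 : σ * g t - σ * g τ ≤ 2*σ*C := by
      have b1 := abs_le.1 (hgb t ht)
      have b2 := abs_le.1 (hgb τ hτT)
      nlinarith [hσ.le]
    have e1 : a * (∫ s in τ..t, φ s) ≤ a * (T ^ (2*H) / (2*H)) :=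
      mul_le_mul_of_nonneg_left hφbound ha.le
    have e2 : 0 ≤ b * ∫ s in τ..t, h s := mul_nonneg hb hint2
    have e4 : a * (∫ s in (0:ℝ)..t, φ s)
        = a * (∫ s in (0:ℝ)..τ, φ s) + a * (∫ s in τ..t, φ s) := by
      rw [← hsplitφ]; ring
    have e5 : b * (∫ s in (0:ℝ)..t, h s)
        = b * (∫ s in (0:ℝ)..τ, h s) + b * (∫ s in τ..t, h s) := by
      rw [← hsplith]; ring
    have heqt := heq t ht
    have heqτ := heq τ hτT
    rw [hUdef] at hUt
    linarith [hτval]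
  -- lower bound and abs
  intro t ht
  have heqt := heq t ht
  have l1 : 0 ≤ ∫ s in (0:ℝ)..t, φ s := by
    refine intervalIntegral.integral_nonneg ht.1 fun u hu => ?_
    show 0 ≤ (u + ε) ^ (2 * H - 1) / ((if 0 < h u then h u else 0) + ε)
    rw [aux_if_eq_max]
    have : (0:ℝ) ≤ max (h u) 0 := le_max_right _ _
    have hu0 : (0:ℝ) ≤ u + ε := by linarith [hu.1]
    positivity
  have l2 : (∫ s in (0:ℝ)..t, h s) ≤ T * U := by
    have step : (∫ s in (0:ℝ)..t, h s) ≤ ∫ _s in (0:ℝ)..t, U :=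
      intervalIntegral.integral_mono_on ht.1 (hhint 0 t h0mem ht)
        intervalIntegrable_const (fun u hu => hup u ⟨hu.1, hu.2.trans ht.2⟩)
    rw [intervalIntegral.integral_const, smul_eq_mul] at step
    have : (t - 0) * U ≤ T * U := by
      apply mul_le_mul_of_nonneg_right _ (by linarith)
      linarith [ht.2]
    linarith
  have l3 : -(σ*C) ≤ σ * g t := by
    have := abs_le.1 (hgb t ht)
    nlinarith [hσ.le]
  have lup := hup t ht
  have llow : X₀ - b*(T*U) - σ*C ≤ h t := by
    have e1 : 0 ≤ a * ∫ s in (0:ℝ)..t, φ s := mul_nonneg ha.le l1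
    have e2 : b * (∫ s in (0:ℝ)..t, h s) ≤ b * (T*U) := mul_le_mul_of_nonneg_left l2 hb
    linarith
  rw [abs_le]
  constructor
  · have hbTU : 0 ≤ b*(T*U) := by positivity
    have : -(U * (1 + b*T) + σ*C) ≤ X₀ - b*(T*U) - σ*C := by nlinarith
    linarith
  · have q1 : 0 ≤ U * (b*T) := mul_nonneg (by linarith) (mul_nonneg hb hT.le)
    have q2 : U*(1+b*T) = U + U*(b*T) := by ring
    linarith

lemma aux_mono {X₀ a b σ H : ℝ} (ha : 0 < a)
    {g : ℝ → ℝ} {T ε : ℝ} (hε : 0 < ε) {h : ℝ → ℝ}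
    (hsol : approxSol X₀ a b σ H g T ε h)
    {s t : ℝ} (hs : 0 ≤ s) (hst : s ≤ t) (htT : t ≤ T) :
    h s + b * (∫ u in (0:ℝ)..s, h u) - σ * g s
      ≤ h t + b * (∫ u in (0:ℝ)..t, h u) - σ * g t := by
  obtain ⟨hcont, heq⟩ := hsol
  set φ : ℝ → ℝ := fun u => (u + ε) ^ (2 * H - 1) / ((if 0 < h u then h u else 0) + ε) with hφ
  have hφc : ContinuousOn φ (Set.Icc 0 T) := aux_phi_contOn hε hcont
  have hsmem : s ∈ Set.Icc (0:ℝ) T := ⟨hs, hst.trans htT⟩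
  have htmem : t ∈ Set.Icc (0:ℝ) T := ⟨hs.trans hst, htT⟩
  have h0mem : (0:ℝ) ∈ Set.Icc (0:ℝ) T := ⟨le_refl _, hs.trans (hst.trans htT)⟩
  have hφint : ∀ u v, u ∈ Set.Icc (0:ℝ) T → v ∈ Set.Icc (0:ℝ) T →
      IntervalIntegrable φ volume u v := fun u v hu hv =>
    (hφc.mono (Set.uIcc_subset_Icc hu hv)).intervalIntegrable
  have hsplit : (∫ u in (0:ℝ)..s, φ u) + (∫ u in s..t, φ u) = ∫ u in (0:ℝ)..t, φ u :=
    intervalIntegral.integral_add_adjacent_intervals (hφint 0 s h0mem hsmem)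
      (hφint s t hsmem htmem)
  have hnn : 0 ≤ ∫ u in s..t, φ u := by
    refine intervalIntegral.integral_nonneg hst fun u hu => ?_
    show 0 ≤ (u + ε) ^ (2 * H - 1) / ((if 0 < h u then h u else 0) + ε)
    rw [aux_if_eq_max]
    have h1 : (0:ℝ) ≤ max (h u) 0 := le_max_right _ _
    have h2 : (0:ℝ) ≤ u + ε := by linarith [hs.trans hu.1]
    positivity
  have heqs := heq s hsmem
  have heqt := heq t htmem
  have e4 : a * (∫ u in (0:ℝ)..t, φ u)
      = a * (∫ u in (0:ℝ)..s, φ u) + a * (∫ u in s..t, φ u) := by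
    rw [← hsplit]; ring
  have e5 : 0 ≤ a * ∫ u in s..t, φ u := mul_nonneg ha.le hnn
  linarith

/-- **Corollary 3.8.** The set of discontinuity points of `X` in `[0,∞)` is
Lebesgue-null; consequently (by Lebesgue's criterion) on every bounded interval
`[c,d] ⊂ [0,∞)` the process `X` is bounded and continuous almost everywhere,
i.e. Riemann integrable on `[c,d]`. -/
theorem limit_process_riemann_integrable
    (X₀ a b σ H : ℝ) (hX₀ : 0 < X₀) (ha : 0 < a) (hb : 0 ≤ b) (hσ : 0 < σ)
    (hH0 : 0 < H) (hH : H < 1/2)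
    (g : ℝ → ℝ) (hgc : ContinuousOn g (Set.Ici 0)) (hg0 : g 0 = 0)
    (Xe : ℝ → ℝ → ℝ)
    (hXe : ∀ ε > (0:ℝ), ∀ T > (0:ℝ), approxSol X₀ a b σ H g T ε (Xe ε))
    (X : ℝ → ℝ)
    (hX : ∀ t ≥ (0:ℝ),
      Tendsto (fun ε => Xe ε t) (nhdsWithin 0 (Set.Ioi 0)) (nhds (X t)))
    (β : ℝ) (hβ0 : 0 < β) (hβH : β < H)
    (hgH : ∀ T > (0:ℝ), ∃ C > (0:ℝ), ∀ s ∈ Set.Icc (0:ℝ) T, ∀ t ∈ Set.Icc (0:ℝ) T,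
      |g t - g s| ≤ C * |t - s| ^ β)
    :
    volume {t : ℝ | 0 ≤ t ∧ ¬ ContinuousWithinAt X (Set.Ici 0) t} = 0 ∧
    ∀ c d : ℝ, 0 ≤ c → c ≤ d →
      (∃ M : ℝ, ∀ t ∈ Set.Icc c d, |X t| ≤ M) ∧
      volume {t ∈ Set.Icc c d | ¬ ContinuousWithinAt X (Set.Icc c d) t} = 0 := by
  -- a sequence ε_n ↓ 0
  set e : ℕ → ℝ := fun n => 1 / ((n : ℝ) + 1) with he
  have hen : ∀ n : ℕ, 0 < e n := fun n => by positivity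
  have hetend : Tendsto e atTop (nhdsWithin 0 (Set.Ioi 0)) := by
    apply tendsto_nhdsWithin_of_tendsto_nhds_of_eventually_within
    · exact tendsto_one_div_add_atTop_nhds_zero_nat
    · exact Eventually.of_forall fun n => hen n
  have hXseq : ∀ t, 0 ≤ t → Tendsto (fun n => Xe (e n) t) atTop (nhds (X t)) :=
    fun t ht => (hX t ht).comp hetend
  -- uniform bounds
  have key : ∀ T, 0 < T → ∃ M : ℝ,
      (∀ ε > (0:ℝ), ∀ t ∈ Set.Icc (0:ℝ) T, |Xe ε t| ≤ M) ∧
      (∀ t ∈ Set.Icc (0:ℝ) T, |X t| ≤ M) := by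
    intro T hT
    obtain ⟨C, hC, hCprop⟩ := hgH T hT
    have hgb : ∀ t ∈ Set.Icc (0:ℝ) T, |g t| ≤ C * T ^ β := by
      intro t ht
      have h1 : |g t - g 0| ≤ C * |t - 0| ^ β :=
        hCprop 0 ⟨le_rfl, hT.le⟩ t ht
      rw [hg0, sub_zero] at h1
      rw [sub_zero] at h1
      refine h1.trans ?_
      have h2 : |t| ^ β ≤ T ^ β := by
        rw [abs_of_nonneg ht.1]
        exact Real.rpow_le_rpow ht.1 ht.2 hβ0.le
      exact mul_le_mul_of_nonneg_left h2 hC.le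
    have hCB : 0 ≤ C * T ^ β := by positivity
    refine ⟨(max 1 X₀ + a * (T ^ (2*H) / (2*H)) + 2*σ*(C * T ^ β)) * (1 + b*T)
      + σ*(C * T ^ β), ?_, ?_⟩
    · intro ε hε t ht
      exact aux_bound hX₀ ha hb hσ hH0 hH hg0 hT hε (hXe ε hε T hT) hCB hgb t ht
    · intro t ht
      have htend : Tendsto (fun n => |Xe (e n) t|) atTop (nhds (|X t|)) :=
        (continuous_abs.tendsto _).comp (hXseq t ht.1)
      exact le_of_tendsto' htend fun n =>
        aux_bound hX₀ ha hb hσ hH0 hH hg0 hT (hen n) (hXe (e n) (hen n) T hT) hCB hgb t ht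
  -- measurability and integrability of X
  have hXaesm : ∀ T, 0 < T → AEStronglyMeasurable X (volume.restrict (Set.Icc 0 T)) := by
    intro T hT
    refine aestronglyMeasurable_of_tendsto_ae atTop
      (fun n => ((hXe (e n) (hen n) T hT).1.aestronglyMeasurable measurableSet_Icc)) ?_
    filter_upwards [ae_restrict_mem measurableSet_Icc] with x hx
    exact hXseq x hx.1
  have hXint : ∀ T, 0 < T → IntegrableOn X (Set.Icc 0 T) volume := by
    intro T hT
    obtain ⟨M, _, hM⟩ := key T hT
    refine Integrable.mono' (g := fun _ => M) ?_ (hXaesm T hT) ?_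
    · exact integrableOn_const measure_Icc_lt_top.ne
    · filter_upwards [ae_restrict_mem measurableSet_Icc] with x hx
      simpa [Real.norm_eq_abs] using hM x hx
  have hXii : ∀ t : ℝ, 0 ≤ t → IntervalIntegrable X volume 0 t := by
    intro t ht
    rw [intervalIntegrable_iff_integrableOn_Ioc_of_le ht]
    exact (hXint (t+1) (by linarith)).mono_set
      (fun x hx => ⟨hx.1.le, hx.2.trans (by linarith)⟩)
  -- convergence of integrals (DCT)
  have hIconv : ∀ t, 0 ≤ t →
      Tendsto (fun n => ∫ u in (0:ℝ)..t, Xe (e n) u) atTop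
        (nhds (∫ u in (0:ℝ)..t, X u)) := by
    intro t ht
    rcases eq_or_lt_of_le ht with rfl | htpos
    · simp only [intervalIntegral.integral_same]
      exact tendsto_const_nhds
    · obtain ⟨M, hMε, _⟩ := key t htpos
      have huIoc : Set.uIoc (0:ℝ) t = Set.Ioc 0 t := Set.uIoc_of_le ht
      refine intervalIntegral.tendsto_integral_filter_of_dominated_convergence
        (fun _ => M) ?_ ?_ intervalIntegrable_const ?_
      · refine Eventually.of_forall fun n => ?_
        refine ((hXe (e n) (hen n) t htpos).1.aestronglyMeasurable
          measurableSet_Icc).mono_measure (Measure.restrict_mono ?_ le_rfl)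
        rw [huIoc]; exact Set.Ioc_subset_Icc_self
      · refine Eventually.of_forall fun n => ae_of_all _ fun x hx => ?_
        rw [huIoc] at hx
        simpa [Real.norm_eq_abs] using
          hMε (e n) (hen n) x ⟨hx.1.le, hx.2⟩
      · refine ae_of_all _ fun x hx => ?_
        rw [huIoc] at hx
        exact hXseq x hx.1.le
  -- the monotone function G
  set P : ℝ → ℝ := fun t => ∫ u in (0:ℝ)..t, X u with hP
  set G : ℝ → ℝ := fun t => X (max t 0) + b * P (max t 0) - σ * g (max t 0) with hG
  have hGmono : Monotone G := by
    intro s t hst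
    have hs' : (0:ℝ) ≤ max s 0 := le_max_right _ _
    have hst' : max s 0 ≤ max t 0 := max_le_max hst le_rfl
    have hT : (0:ℝ) < max t 0 + 1 := by linarith [le_max_right t (0:ℝ)]
    have step : ∀ n : ℕ,
        Xe (e n) (max s 0) + b * (∫ u in (0:ℝ)..(max s 0), Xe (e n) u)
            - σ * g (max s 0)
          ≤ Xe (e n) (max t 0) + b * (∫ u in (0:ℝ)..(max t 0), Xe (e n) u)
            - σ * g (max t 0) := fun n =>
      aux_mono ha (hen n) (hXe (e n) (hen n) _ hT) hs' hst' (by linarith)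
    have hlim : ∀ u : ℝ, 0 ≤ u →
        Tendsto (fun n => Xe (e n) u + b * (∫ v in (0:ℝ)..u, Xe (e n) v) - σ * g u)
          atTop (nhds (X u + b * P u - σ * g u)) := by
      intro u hu
      exact (((hXseq u hu).add ((hIconv u hu).const_mul b)).sub tendsto_const_nhds)
    exact le_of_tendsto_of_tendsto' (hlim _ hs') (hlim _ (le_max_right _ _)) step
  have hGcount : Set.Countable {x : ℝ | ¬ ContinuousAt G x} :=
    hGmono.countable_not_continuousAt
  -- discontinuities of X are contained in those of G
  have hsubset : {t : ℝ | 0 ≤ t ∧ ¬ ContinuousWithinAt X (Set.Ici 0) t}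
      ⊆ {x : ℝ | ¬ ContinuousAt G x} := by
    rintro t ⟨ht, hdis⟩
    simp only [Set.mem_setOf_eq]
    intro hGc
    apply hdis
    -- continuity of the primitive P within Ici 0 at t
    have hPcwa : ContinuousWithinAt P (Set.Ici 0) t := by
      have hii : IntervalIntegrable X volume 0 (t+1) := hXii (t+1) (by linarith)
      have hcp := intervalIntegral.continuousOn_primitive_interval' hii
        Set.left_mem_uIcc
      rw [Set.uIcc_of_le (by linarith : (0:ℝ) ≤ t + 1)] at hcp
      have hmem' : Set.Icc (0:ℝ) (t+1) ∈ nhdsWithin t (Set.Ici 0) := by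
        refine mem_nhdsWithin.2 ⟨Set.Iio (t+1), isOpen_Iio, Set.mem_Iio.2 (by linarith), ?_⟩
        rintro x ⟨hx1, hx2⟩
        exact ⟨hx2, le_of_lt hx1⟩
      exact (hcp t ⟨ht, by linarith⟩).mono_of_mem_nhdsWithin hmem'
    have hgcwa : ContinuousWithinAt g (Set.Ici 0) t := hgc t ht
    have hGcwa : ContinuousWithinAt G (Set.Ici 0) t := hGc.continuousWithinAt
    have hcombo : ContinuousWithinAt (fun u => G u - b * P u + σ * g u)
        (Set.Ici 0) t :=
      (hGcwa.sub (continuousWithinAt_const.mul hPcwa)).add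
        (continuousWithinAt_const.mul hgcwa)
    refine hcombo.congr ?_ ?_
    · intro u hu
      simp only [hG, max_eq_left (Set.mem_Ici.1 hu)]
      ring
    · simp only [hG, max_eq_left ht]
      ring
  have hnull : volume {t : ℝ | 0 ≤ t ∧ ¬ ContinuousWithinAt X (Set.Ici 0) t} = 0 :=
    measure_mono_null hsubset (hGcount.measure_zero _)
  refine ⟨hnull, ?_⟩
  intro c d hc hcd
  constructor
  · obtain ⟨M, _, hM⟩ := key (d+1) (by linarith)
    exact ⟨M, fun t ht => hM t ⟨hc.trans ht.1, by linarith [ht.2]⟩⟩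
  · refine measure_mono_null ?_ hnull
    rintro t ⟨htmem, hdis⟩
    refine ⟨hc.trans htmem.1, fun hcwa => hdis ?_⟩
    exact hcwa.mono fun x hx => hc.trans hx.1
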